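/- Let D be Exponential(λ) with λ ∈ (0, 1/(ce)] for cost c > 0, let τ = log(1/(λc))/λ be the fair-cap value, and let σ(n) = 16τ·r_δ(n) with r_δ(n) = min{1/2, sqrt((6/n) log(2n(n+1)/δ))}. Then ∑_{n=1}^∞ σ(n)·(1 − F_λ(τ))·(F_λ(τ + σ(n))^{n−1} − F_λ(τ)^{n−1}) ≤ C·(1/λ)·polylog(1/δ) for a universal constant C, where F_λ(x) = 1 − e^{−λx}. -/

import Mathlib

theorem my_pow_sub_pow_le {a b M : ℝ} (hb : 0 ≤ b) (hba : b ≤ a) (haM : a ≤ M) (hM : M ≤ 1) :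
    ∀ n : ℕ, a ^ n - b ^ n ≤ n * (a - b) * M ^ (n - 1) := by
  have hM0 : 0 ≤ M := le_trans (le_trans hb hba) haM
  have ha0 : 0 ≤ a := le_trans hb hba
  intro n
  induction n with
  | zero => simp
  | succ k ih =>
    have hpow : b ^ k ≤ a ^ k := pow_le_pow_left₀ hb hba k
    have hpd : 0 ≤ a ^ k - b ^ k := by linarith
    have hMk : M * M ^ (k - 1) ≤ M ^ k := by
      cases k with
      | zero => simpa using hM
      | succ j => simp [pow_succ, Nat.add_sub_cancel, mul_comm]
    have haMk : a ^ k ≤ M ^ k := pow_le_pow_left₀ ha0 haM k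
    have key : a ^ (k+1) - b ^ (k+1) = a * (a ^ k - b ^ k) + (a - b) * b ^ k := by ring
    have h1 : a * (a ^ k - b ^ k) ≤ M * (k * (a - b) * M ^ (k - 1)) := by
      apply mul_le_mul haM ih hpd hM0
    have h2 : M * (k * (a - b) * M ^ (k - 1)) ≤ k * (a - b) * M ^ k := by
      have : M * (k * (a - b) * M ^ (k - 1)) = (k * (a - b)) * (M * M ^ (k-1)) := by ring
      rw [this]
      apply mul_le_mul_of_nonneg_left hMk
      have hab : 0 ≤ a - b := by linarith
      positivity
    have h3 : (a - b) * b ^ k ≤ (a - b) * M ^ k := by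
      apply mul_le_mul_of_nonneg_left (le_trans hpow haMk) (by linarith)
    have : a ^ (k+1) - b ^ (k+1) ≤ (k * (a - b)) * M ^ k + (a - b) * M ^ k := by
      rw [key]; exact add_le_add (le_trans h1 h2) h3
    calc a ^ (k+1) - b ^ (k+1) ≤ (k * (a - b)) * M ^ k + (a - b) * M ^ k := this
      _ = (k+1 : ℕ) * (a - b) * M ^ k := by push_cast; ring
      _ = (k+1 : ℕ) * (a - b) * M ^ ((k+1) - 1) := by norm_num

lemma log_le_lin {x t : ℝ} (hx : 0 < x) (ht : 0 < t) :
    Real.log x ≤ t * x + Real.log (1 / t) := by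
  have h1 : Real.log (x * t) ≤ x * t - 1 := Real.log_le_sub_one_of_pos (by positivity)
  rw [Real.log_mul (ne_of_gt hx) (ne_of_gt ht)] at h1
  rw [one_div, Real.log_inv]
  nlinarith

lemma lQ_le (δ : ℝ) (hδ0 : 0 < δ) (hδ1 : δ < 1) (n : ℕ) :
    Real.log (2 * ((n:ℝ) + 1) * ((n:ℝ) + 2) / δ)
      ≤ (2 * Real.log ((n:ℝ) + 2) + 1) * (1 + Real.log (1 / δ)) := by
  have hn0 : (0:ℝ) ≤ (n:ℝ) := Nat.cast_nonneg n
  have h1 : Real.log (2 * ((n:ℝ) + 1) * ((n:ℝ) + 2) / δ)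
      = Real.log 2 + Real.log ((n:ℝ) + 1) + Real.log ((n:ℝ) + 2) + Real.log (1/δ) := by
    rw [div_eq_mul_one_div, Real.log_mul (by positivity) (by positivity),
      Real.log_mul (by positivity) (by positivity), Real.log_mul (by norm_num) (by positivity)]
  have h2 : Real.log 2 ≤ 1 := by
    nlinarith [Real.log_le_sub_one_of_pos (show (0:ℝ) < 2 by norm_num)]
  have h3 : Real.log ((n:ℝ) + 1) ≤ Real.log ((n:ℝ) + 2) :=
    Real.log_le_log (by positivity) (by linarith)
  have h4 : 0 ≤ Real.log ((n:ℝ) + 2) := Real.log_nonneg (by linarith)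
  have h5 : 0 ≤ Real.log (1/δ) := Real.log_nonneg (by rw [le_div_iff₀ hδ0]; linarith)
  nlinarith [mul_nonneg h4 h5]

lemma two_lg_sq (n : ℕ) :
    (2 * Real.log ((n:ℝ) + 2) + 1)^2 ≤ 130 * ((n:ℝ) + 1) ^ ((1/2:ℝ)) := by
  have hn0 : (0:ℝ) ≤ (n:ℝ) := Nat.cast_nonneg n
  set y : ℝ := ((n:ℝ) + 2) ^ ((1/4:ℝ)) with hy
  have hy0 : 0 < y := Real.rpow_pos_of_pos (by linarith) _
  have hylog : Real.log y = (1/4) * Real.log ((n:ℝ) + 2) := by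
    rw [hy, Real.log_rpow (by linarith)]
  have hy1 : Real.log ((n:ℝ) + 2) ≤ 4 * y - 4 := by
    have := Real.log_le_sub_one_of_pos hy0
    rw [hylog] at this; linarith
  have hyge1 : 1 ≤ y := by
    have : (1:ℝ) = (1:ℝ) ^ ((1/4:ℝ)) := by rw [Real.one_rpow]
    rw [this, hy]
    apply Real.rpow_le_rpow (by norm_num) (by linarith) (by norm_num)
  have hysq : y * y = ((n:ℝ) + 2) ^ ((1/2:ℝ)) := by
    rw [hy, ← Real.rpow_add (by linarith)]; norm_num
  have hmono : ((n:ℝ) + 2) ^ ((1/2:ℝ)) ≤ (2:ℝ) ^ ((1/2:ℝ)) * ((n:ℝ) + 1) ^ ((1/2:ℝ)) := by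
    rw [← Real.mul_rpow (by norm_num) (by linarith)]
    apply Real.rpow_le_rpow (by linarith) (by linarith) (by norm_num)
  have hsqrt2 : (2:ℝ) ^ ((1/2:ℝ)) ≤ 1.5 := by
    have h2 : (2:ℝ) ^ ((1/2:ℝ)) * (2:ℝ) ^ ((1/2:ℝ)) = 2 := by
      rw [← Real.rpow_add (by norm_num)]; norm_num
    nlinarith [Real.rpow_pos_of_pos (show (0:ℝ) < 2 by norm_num) ((1/2:ℝ))]
  have hrnn : (0:ℝ) ≤ ((n:ℝ) + 1) ^ ((1/2:ℝ)) := Real.rpow_nonneg (by linarith) _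
  -- (2 lg + 1)^2 ≤ (8y-7)^2 ≤ 81 y^2 = 81 (n+2)^{1/2} ≤ 81*1.5*(n+1)^{1/2} ≤ 130 ...
  have h4 : 0 ≤ Real.log ((n:ℝ) + 2) := Real.log_nonneg (by linarith)
  nlinarith [hy1, hyge1, hysq, hmono, hsqrt2, hrnn, h4, sq_nonneg (y - 1)]

lemma nr_pow_le (a : ℝ) (ha1 : a ≤ 1) (n : ℕ) :
    (n:ℝ) * Real.exp (-a) ^ (n-1) ≤ Real.exp 1 * ((n:ℝ) * Real.exp (-a) ^ n) := by
  cases n with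
  | zero => simp
  | succ k =>
    have hr0 : 0 < Real.exp (-a) := Real.exp_pos _
    have hinv : Real.exp a * Real.exp (-a) = 1 := by rw [← Real.exp_add]; simp
    have hk : Real.exp (-a) ^ (k+1-1) = Real.exp a * Real.exp (-a) ^ (k+1) := by
      rw [Nat.add_sub_cancel, pow_succ]
      calc Real.exp (-a)^k = Real.exp (-a)^k * (Real.exp a * Real.exp (-a)) := by rw [hinv]; ring
        _ = Real.exp a * (Real.exp (-a)^k * Real.exp (-a)) := by ring
    rw [hk]
    have hea : Real.exp a ≤ Real.exp 1 := Real.exp_le_exp.mpr ha1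
    have hK : (0:ℝ) ≤ ((k:ℝ)+1) * Real.exp (-a) ^ (k+1) := by positivity
    have h2 := mul_le_mul_of_nonneg_right hea hK
    push_cast
    nlinarith [h2]

noncomputable def termF (c lam δ : ℝ) (n : ℕ) : ℝ :=
  (16 * (Real.log (1 / (lam * c)) / lam) *
      min (1/2) (Real.sqrt (6 / (n + 1) *
        Real.log (2 * (n + 1) * (n + 2) / δ)))) *
    (1 - (1 - Real.exp (-lam * (Real.log (1 / (lam * c)) / lam)))) *
    ((1 - Real.exp (-lam * ((Real.log (1 / (lam * c)) / lam) +
        16 * (Real.log (1 / (lam * c)) / lam) *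
          min (1/2) (Real.sqrt (6 / (n + 1) *
            Real.log (2 * (n + 1) * (n + 2) / δ)))))) ^ n -
      (1 - Real.exp (-lam * (Real.log (1 / (lam * c)) / lam))) ^ n)

noncomputable def ae (c lam : ℝ) : ℝ := lam * c * (Real.exp 1)⁻¹

noncomputable def D1e (c lam δ : ℝ) : ℝ :=
  8 * 1536^2 * 130 * (Real.log (1/(lam*c)) / lam) * (lam*c) * (Real.log (1/(lam*c)))^4
    * (1 + Real.log (1/δ))^2

noncomputable def Kve (c lam δ : ℝ) : ℝ :=
  1536 * Real.exp 1 * (Real.log (1/(lam*c)) / lam) * Real.log (1/(lam*c)) * (lam*c)^2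
    * (1 + Real.log (1/δ))

noncomputable def gFe (c lam δ : ℝ) (n : ℕ) : ℝ :=
  D1e c lam δ * ((n:ℝ)+1) ^ (-(3/2) : ℝ)
  + (Kve c lam δ * (ae c lam / 4)) * ((n:ℝ) * Real.exp (-(ae c lam)) ^ n)
  + (Kve c lam δ * (2 * Real.log (8 / ae c lam) + 2)) * Real.exp (-(ae c lam)) ^ n

set_option maxHeartbeats 1000000 in
theorem termF_le_gFe (c lam δ : ℝ) (hc : 0 < c) (hlam : 0 < lam)
    (hle : lam * (c * Real.exp 1) ≤ 1) (hδ0 : 0 < δ) (hδ1 : δ < 1) (n : ℕ) :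
    termF c lam δ n ≤ gFe c lam δ n := by
  have he1 : (1:ℝ) < Real.exp 1 := by
    have := Real.add_one_le_exp 1; linarith [Real.exp_one_gt_d9]
  have hlc0 : 0 < lam * c := mul_pos hlam hc
  have hlce : lam * c ≤ (Real.exp 1)⁻¹ := by
    rw [inv_eq_one_div, le_div_iff₀ (Real.exp_pos 1)]
    linarith [mul_assoc lam c (Real.exp 1)]
  have hlclt1 : lam * c < 1 := by
    have : (Real.exp 1)⁻¹ < 1 := by
      rw [inv_lt_one_iff₀]; right; linarith
    linarith
  set L : ℝ := Real.log (1 / (lam * c)) with hLdef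
  have hL1 : (1:ℝ) ≤ L := by
    rw [hLdef, Real.le_log_iff_exp_le (by positivity), le_div_iff₀ hlc0]
    linarith [mul_assoc lam c (Real.exp 1), mul_comm (Real.exp 1) (lam * c)]
  have hexpL : Real.exp (-L) = lam * c := by
    rw [hLdef, one_div, Real.log_inv, neg_neg, Real.exp_log hlc0]
  set tau : ℝ := L / lam with htaudef
  have htau0 : 0 < tau := div_pos (by linarith) hlam
  set a : ℝ := ae c lam with hadef
  have hae : a = lam * c * (Real.exp 1)⁻¹ := by rw [hadef, ae]
  have ha0 : 0 < a := by rw [hae]; positivity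
  have ha1 : a ≤ 1 := by
    rw [hae]
    have h2 : (Real.exp 1)⁻¹ ≤ 1 := by
      rw [inv_le_one_iff₀]; right; linarith
    nlinarith [inv_pos.mpr (Real.exp_pos 1)]
  set r : ℝ := Real.exp (-a) with hrdef
  have hr0 : 0 < r := Real.exp_pos _
  have hr1 : r < 1 := by rw [hrdef]; exact Real.exp_lt_one_iff.mpr (by linarith)
  set P : ℝ := 1 + Real.log (1/δ) with hPdef
  have hdelta' : 0 < Real.log (1/δ) := Real.log_pos (by rw [lt_div_iff₀ hδ0]; linarith)
  have hP1 : 1 ≤ P := by rw [hPdef]; linarith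
  have hlog8a : 0 ≤ Real.log (8 / a) := by
    apply Real.log_nonneg
    rw [le_div_iff₀ ha0]; linarith
  have hKv0 : 0 ≤ Kve c lam δ := by
    rw [Kve, ← hLdef, ← htaudef, ← hPdef]
    have : 0 ≤ Real.exp 1 := (Real.exp_pos 1).le
    positivity
  -- n-dependent quantities
  have hn0 : (0:ℝ) ≤ (n:ℝ) := Nat.cast_nonneg n
  have hnu0 : (0:ℝ) < (n:ℝ) + 1 := by linarith only [hn0]
  have hQ1 : (1:ℝ) ≤ 2 * ((n:ℝ) + 1) * ((n:ℝ) + 2) / δ := by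
    rw [le_div_iff₀ hδ0]; nlinarith only [hn0, hδ1, sq_nonneg ((n:ℝ))]
  set lQ : ℝ := Real.log (2 * ((n:ℝ) + 1) * ((n:ℝ) + 2) / δ) with hlQdef
  have hlQ0 : 0 ≤ lQ := Real.log_nonneg hQ1
  have hx0 : 0 ≤ 6 / ((n:ℝ) + 1) * lQ := by positivity
  set m : ℝ := min (1/2) (Real.sqrt (6 / ((n:ℝ) + 1) * lQ)) with hmdef
  have hm0 : 0 ≤ m := le_min (by norm_num) (Real.sqrt_nonneg _)
  have hmhalf : m ≤ 1/2 := min_le_left _ _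
  have hmsq : ((n:ℝ) + 1) * m^2 ≤ 6 * lQ := by
    have h1 : m ^ 2 ≤ 6 / ((n:ℝ) + 1) * lQ := by
      calc m^2 ≤ Real.sqrt (6 / ((n:ℝ)+1) * lQ) ^ 2 :=
            pow_le_pow_left₀ hm0 (min_le_right _ _) 2
        _ = _ := Real.sq_sqrt hx0
    calc ((n:ℝ)+1) * m^2 ≤ ((n:ℝ)+1) * (6/((n:ℝ)+1) * lQ) :=
          mul_le_mul_of_nonneg_left h1 hnu0.le
      _ = 6 * lQ := by field_simp
  have hmle : m ≤ Real.sqrt (6 / ((n:ℝ)+1) * lQ) := min_le_right _ _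
  set u : ℝ := 16 * L * m with hudef
  have hu0 : 0 ≤ u := by
    rw [hudef]; apply mul_nonneg (by linarith only [hL1]) hm0
  -- rewrite the goal
  rw [termF, ← hLdef, ← htaudef, ← hmdef]
  have hexptau : Real.exp (-lam * tau) = lam * c := by
    rw [htaudef, show -lam * (L/lam) = -L by field_simp]; exact hexpL
  have hexpA : Real.exp (-lam * (tau + 16 * tau * m)) = lam * c * Real.exp (-u) := by
    rw [show -lam * (tau + 16 * tau * m) = -L + -u by rw [htaudef, hudef]; field_simp; ring,
      Real.exp_add, hexpL]
  rw [hexptau, hexpA]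
  clear_value u m lQ P r a tau L
  set B : ℝ := 1 - lam * c with hBdef
  set A : ℝ := 1 - lam * c * Real.exp (-u) with hAdef
  have hexpu1 : Real.exp (-u) ≤ 1 := Real.exp_le_one_iff.mpr (by linarith only [hu0])
  have hexpu0 : 0 < Real.exp (-u) := Real.exp_pos _
  have hB0 : 0 ≤ B := by rw [hBdef]; linarith only [hlclt1]
  have hBA : B ≤ A := by
    have h := mul_le_of_le_one_right hlc0.le hexpu1
    rw [hBdef, hAdef]; linarith only [h]
  have hA1 : A ≤ 1 := by
    have h := mul_nonneg hlc0.le hexpu0.le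
    rw [hAdef]; linarith only [h]
  have hA0 : 0 ≤ A := le_trans hB0 hBA
  have hpowBA : B ^ n ≤ A ^ n := pow_le_pow_left₀ hB0 hBA n
  have goal_eq : (1 - (1 - lam * c)) = lam * c := by ring
  rw [goal_eq]
  -- the two cases
  by_cases hcase : 16 * L * m ≤ 1
  · -- small-u case
    have hu1 : u ≤ 1 := by rw [hudef]; exact hcase
    have hMa : A ≤ 1 - a := by
      have h1 : Real.exp (-(1:ℝ)) ≤ Real.exp (-u) := Real.exp_le_exp.mpr (by linarith only [hu1])
      have h2 : lam * c * Real.exp (-(1:ℝ)) = a := by rw [hae, Real.exp_neg]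
      have h3 : lam * c * Real.exp (-(1:ℝ)) ≤ lam * c * Real.exp (-u) :=
        mul_le_mul_of_nonneg_left h1 hlc0.le
      rw [hAdef]; linarith only [h3, h2]
    have h1a0 : 0 ≤ 1 - a := by linarith only [ha1]
    have hpow := my_pow_sub_pow_le hB0 hBA hMa (by linarith only [ha0] : (1:ℝ) - a ≤ 1) n
    have hABu : A - B ≤ lam * c * u := by
      have h1 : 1 - u ≤ Real.exp (-u) := by linarith only [Real.add_one_le_exp (-u)]
      have h2 := mul_le_mul_of_nonneg_left h1 hlc0.le
      rw [hAdef, hBdef]; linarith only [h2]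
    have h1ar : 1 - a ≤ r := by rw [hrdef]; linarith only [Real.add_one_le_exp (-a)]
    have hpow2 : ((1:ℝ) - a)^(n-1) ≤ r^(n-1) := pow_le_pow_left₀ h1a0 h1ar _
    have hABn : A^n - B^n ≤ (n:ℝ) * (lam*c*u) * r^(n-1) := by
      have s1 : (n:ℝ)*(A-B)*((1:ℝ)-a)^(n-1) ≤ (n:ℝ)*(lam*c*u)*((1:ℝ)-a)^(n-1) :=
        mul_le_mul_of_nonneg_right (mul_le_mul_of_nonneg_left hABu hn0) (pow_nonneg h1a0 _)
      have s2 : (n:ℝ)*(lam*c*u)*((1:ℝ)-a)^(n-1) ≤ (n:ℝ)*(lam*c*u)*r^(n-1) :=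
        mul_le_mul_of_nonneg_left hpow2 (mul_nonneg hn0 (mul_nonneg hlc0.le hu0))
      linarith only [hpow, s1, s2]
    have hbig : 0 ≤ 16 * tau * m * (lam * c) :=
      mul_nonneg (mul_nonneg (mul_nonneg (by norm_num) htau0.le) hm0) hlc0.le
    have hcoef2 : 0 ≤ 16*tau*m*(lam*c)*(lam*c)*u :=
      mul_nonneg (mul_nonneg hbig hlc0.le) hu0
    have hcoef3 : 0 ≤ 256*Real.exp 1*tau*L*(lam*c)^2 := by
      apply mul_nonneg (mul_nonneg (mul_nonneg (mul_nonneg (by norm_num) (Real.exp_pos 1).le)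
        htau0.le) (by linarith)) (sq_nonneg _)
    have hcoef3' : 0 ≤ 1536*Real.exp 1*tau*L*(lam*c)^2 := by
      apply mul_nonneg (mul_nonneg (mul_nonneg (mul_nonneg (by norm_num) (Real.exp_pos 1).le)
        htau0.le) (by linarith)) (sq_nonneg _)
    have hnm2 : (n:ℝ)*m^2 ≤ 6*lQ := by linarith only [hmsq, sq_nonneg m]
    have hlQP := lQ_le δ hδ0 hδ1 n
    rw [← hlQdef, ← hPdef] at hlQP
    have hP0 : (0:ℝ) ≤ P := by linarith only [hP1]
    have hlgP : (2*Real.log ((n:ℝ)+2)+1)*P ≤ ((a/4)*(n:ℝ) + (2*Real.log (8/a)+2))*P := by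
      have hx2 : (0:ℝ) < (n:ℝ)+2 := by linarith only [hn0]
      have ht8 : (0:ℝ) < a/8 := by linarith only [ha0]
      have h1 := log_le_lin hx2 ht8
      rw [one_div_div] at h1
      apply mul_le_mul_of_nonneg_right _ hP0
      linarith only [h1, ha1]
    have hW := nr_pow_le a ha1 n
    rw [← hrdef] at hW
    have hD1nn : 0 ≤ D1e c lam δ * ((n:ℝ)+1) ^ (-(3/2):ℝ) := by
      apply mul_nonneg _ (Real.rpow_nonneg hnu0.le _)
      rw [D1e, ← hLdef, ← htaudef, ← hPdef]
      apply mul_nonneg (mul_nonneg (mul_nonneg _ hlc0.le) (by positivity)) (sq_nonneg P)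
      have : (0:ℝ) ≤ 8 * 1536^2 * 130 := by norm_num
      linarith only [htau0]
    calc 16*tau*m*(lam*c)*(A^n - B^n)
        ≤ 16*tau*m*(lam*c)*((n:ℝ)*(lam*c*u)*r^(n-1)) := mul_le_mul_of_nonneg_left hABn hbig
      _ = (16*tau*m*(lam*c)*(lam*c)*u) * ((n:ℝ)*r^(n-1)) := by ring
      _ ≤ (16*tau*m*(lam*c)*(lam*c)*u) * (Real.exp 1 * ((n:ℝ)*r^n)) :=
          mul_le_mul_of_nonneg_left hW hcoef2
      _ = 256*Real.exp 1*tau*L*(lam*c)^2*((n:ℝ)*m^2)*r^n := by rw [hudef]; ring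
      _ ≤ 256*Real.exp 1*tau*L*(lam*c)^2*(6*lQ)*r^n :=
          mul_le_mul_of_nonneg_right (mul_le_mul_of_nonneg_left hnm2 hcoef3)
            (pow_nonneg hr0.le n)
      _ = 1536*Real.exp 1*tau*L*(lam*c)^2*lQ*r^n := by ring
      _ ≤ 1536*Real.exp 1*tau*L*(lam*c)^2*((2*Real.log ((n:ℝ)+2)+1)*P)*r^n :=
          mul_le_mul_of_nonneg_right (mul_le_mul_of_nonneg_left hlQP hcoef3')
            (pow_nonneg hr0.le n)
      _ ≤ 1536*Real.exp 1*tau*L*(lam*c)^2*(((a/4)*(n:ℝ) + (2*Real.log (8/a)+2))*P)*r^n :=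
          mul_le_mul_of_nonneg_right (mul_le_mul_of_nonneg_left hlgP hcoef3')
            (pow_nonneg hr0.le n)
      _ = (Kve c lam δ * (a/4)) * ((n:ℝ)*r^n) + (Kve c lam δ * (2*Real.log (8/a)+2)) * r^n := by
          rw [Kve, ← hLdef, ← htaudef, ← hPdef]; ring
      _ ≤ gFe c lam δ n := by
          rw [gFe, ← hadef, ← hrdef]
          linarith only [hD1nn]

  · -- large-m case
    rw [not_le] at hcase
    have hsq : 1 < 1536 * L^2 * lQ / ((n:ℝ) + 1) := by
      have h1 : 1 < 16 * L * Real.sqrt (6 / ((n:ℝ)+1) * lQ) :=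
        lt_of_lt_of_le hcase (mul_le_mul_of_nonneg_left hmle (by linarith only [hL1]))
      have h2 := Real.sq_sqrt hx0
      have h3 : 1 < (16 * L * Real.sqrt (6 / ((n:ℝ)+1) * lQ))^2 :=
        one_lt_pow₀ h1 (by norm_num)
      have h4 : (16 * L * Real.sqrt (6 / ((n:ℝ)+1) * lQ))^2
          = 256 * L^2 * (6 / ((n:ℝ)+1) * lQ) := by
        rw [show (16 * L * Real.sqrt (6 / ((n:ℝ)+1) * lQ))^2
            = 256 * L^2 * (Real.sqrt (6 / ((n:ℝ)+1) * lQ))^2 by ring, h2]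
      have h5 : 256 * L^2 * (6 / ((n:ℝ)+1) * lQ) = 1536 * L^2 * lQ / ((n:ℝ)+1) := by
        field_simp; ring
      linarith only [h1, h3, h4, h5]
    have hApow : A ^ n - B ^ n ≤ 1 := by
      have h1 : A ^ n ≤ 1 := pow_le_one₀ hA0 hA1
      have h2 : 0 ≤ B ^ n := pow_nonneg hB0 n
      linarith only [h1, h2]
    have hq2 : 1 ≤ (1536 * L^2 * lQ / ((n:ℝ)+1))^2 := one_le_pow₀ hsq.le
    have hlQsq : lQ^2 ≤ 130 * P^2 * ((n:ℝ)+1) ^ ((1/2:ℝ)) := by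
      have h1 := lQ_le δ hδ0 hδ1 n
      rw [← hlQdef, ← hPdef] at h1
      have h2 := two_lg_sq n
      have h3 : lQ^2 ≤ ((2 * Real.log ((n:ℝ)+2) + 1) * P)^2 := by
        apply pow_le_pow_left₀ hlQ0 h1
      have h4 : ((2 * Real.log ((n:ℝ)+2) + 1) * P)^2
          = (2 * Real.log ((n:ℝ)+2) + 1)^2 * P^2 := by ring
      have h5 : (2 * Real.log ((n:ℝ)+2) + 1)^2 * P^2 ≤ (130 * ((n:ℝ)+1) ^ ((1/2:ℝ))) * P^2 :=
        mul_le_mul_of_nonneg_right h2 (sq_nonneg P)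
      calc lQ^2 ≤ ((2 * Real.log ((n:ℝ)+2) + 1) * P)^2 := h3
        _ = (2 * Real.log ((n:ℝ)+2) + 1)^2 * P^2 := h4
        _ ≤ (130 * ((n:ℝ)+1) ^ ((1/2:ℝ))) * P^2 := h5
        _ = 130 * P^2 * ((n:ℝ)+1) ^ ((1/2:ℝ)) := by ring
    have hstep1 : 16 * tau * m * (lam * c) * (A ^ n - B ^ n) ≤ 8 * tau * (lam * c) * 1 := by
      have hd1 : 0 ≤ tau * m * (lam*c) * (1 - (A^n - B^n)) := by
        apply mul_nonneg (mul_nonneg (mul_nonneg htau0.le hm0) hlc0.le); linarith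
      have hd2 : 0 ≤ tau * (lam*c) * (1/2 - m) := by
        apply mul_nonneg (mul_nonneg htau0.le hlc0.le); linarith
      linarith only [hd1, hd2]
    have hstep2 : 8 * tau * (lam * c) * 1 ≤ 8 * tau * (lam * c) * (1536 * L^2 * lQ / ((n:ℝ)+1))^2 :=
      mul_le_mul_of_nonneg_left hq2 (by positivity)
    have hstep3 : 8 * tau * (lam * c) * (1536 * L^2 * lQ / ((n:ℝ)+1))^2
        ≤ 8 * tau * (lam * c) * (1536^2 * L^4 * (130 * P^2 * ((n:ℝ)+1) ^ ((1/2:ℝ))) / ((n:ℝ)+1)^2) := by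
      apply mul_le_mul_of_nonneg_left _ (by positivity : (0:ℝ) ≤ 8 * tau * (lam*c))
      rw [div_pow]
      rw [show (1536 * L^2 * lQ)^2 = 1536^2 * L^4 * lQ^2 by ring]
      gcongr
    have hstep4 : 8 * tau * (lam * c) * (1536^2 * L^4 * (130 * P^2 * ((n:ℝ)+1) ^ ((1/2:ℝ))) / ((n:ℝ)+1)^2)
        = D1e c lam δ * ((n:ℝ)+1) ^ (-(3/2):ℝ) := by
      have hpow2 : (((n:ℝ)+1):ℝ)^(2:ℕ) = ((n:ℝ)+1) ^ ((2:ℝ)) := by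
        rw [← Real.rpow_natCast ((n:ℝ)+1) 2]; norm_num
      have hdiv : ((n:ℝ)+1) ^ ((1/2:ℝ)) / ((n:ℝ)+1)^(2:ℕ) = ((n:ℝ)+1) ^ (-(3/2):ℝ) := by
        rw [hpow2, ← Real.rpow_sub hnu0]; norm_num
      rw [D1e, ← hLdef, ← htaudef, ← hPdef, ← hdiv]
      field_simp
    have hgnn : 0 ≤ (Kve c lam δ * (a / 4)) * ((n:ℝ) * r ^ n)
        ∧ 0 ≤ (Kve c lam δ * (2 * Real.log (8 / a) + 2)) * r ^ n := by
      constructor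
      · apply mul_nonneg (mul_nonneg hKv0 (by linarith)) (mul_nonneg hn0 (pow_nonneg hr0.le n))
      · apply mul_nonneg (mul_nonneg hKv0 (by linarith)) (pow_nonneg hr0.le n)
    calc 16 * tau * m * (lam * c) * (A ^ n - B ^ n) ≤ 8 * tau * (lam * c) * 1 := hstep1
      _ ≤ 8 * tau * (lam * c) * (1536 * L^2 * lQ / ((n:ℝ)+1))^2 := hstep2
      _ ≤ 8 * tau * (lam * c) * (1536^2 * L^4 * (130 * P^2 * ((n:ℝ)+1) ^ ((1/2:ℝ))) / ((n:ℝ)+1)^2) := hstep3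
      _ = D1e c lam δ * ((n:ℝ)+1) ^ (-(3/2):ℝ) := hstep4
      _ ≤ gFe c lam δ n := by
          rw [gFe, ← hadef, ← hrdef]
          linarith only [hgnn.1, hgnn.2]


theorem termF_nonneg (c lam δ : ℝ) (hc : 0 < c) (hlam : 0 < lam)
    (hle : lam * (c * Real.exp 1) ≤ 1) (n : ℕ) : 0 ≤ termF c lam δ n := by
  have he1 : (1:ℝ) < Real.exp 1 := by
    have := Real.add_one_le_exp 1; linarith [Real.exp_one_gt_d9]
  have hlc0 : 0 < lam * c := mul_pos hlam hc
  have hlc1 : lam * c ≤ 1 := by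
    have h := mul_le_mul_of_nonneg_left he1.le hlc0.le
    nlinarith [h, hle]
  have hL0 : 0 ≤ Real.log (1 / (lam * c)) := Real.log_nonneg (by rw [le_div_iff₀ hlc0]; linarith)
  rw [termF]
  set L : ℝ := Real.log (1 / (lam * c)) with hLdef
  set tau : ℝ := L / lam with htaudef
  have htau0 : 0 ≤ tau := div_nonneg hL0 hlam.le
  set m : ℝ := min (1/2) (Real.sqrt (6 / ((n:ℝ) + 1) *
    Real.log (2 * ((n:ℝ) + 1) * ((n:ℝ) + 2) / δ))) with hmdef
  have hm0 : 0 ≤ m := le_min (by norm_num) (Real.sqrt_nonneg _)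
  have hlt0 : 0 ≤ lam * tau := mul_nonneg hlam.le htau0
  have hs0 : 0 ≤ lam * (16 * tau * m) :=
    mul_nonneg hlam.le (mul_nonneg (mul_nonneg (by norm_num) htau0) hm0)
  apply mul_nonneg (mul_nonneg ?_ ?_) ?_
  · exact mul_nonneg (mul_nonneg (by norm_num) htau0) hm0
  · have := (Real.exp_pos (-lam * tau)).le
    linarith
  · apply sub_nonneg.mpr
    apply pow_le_pow_left₀
    · have : Real.exp (-lam * tau) ≤ 1 := Real.exp_le_one_iff.mpr (by linarith)
      linarith
    · have : Real.exp (-lam * (tau + 16 * tau * m)) ≤ Real.exp (-lam * tau) := by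
        apply Real.exp_le_exp.mpr
        have : -lam * (tau + 16 * tau * m) = -lam*tau - lam*(16*tau*m) := by ring
        rw [this]; linarith
      linarith


set_option maxHeartbeats 1000000 in
theorem exponential_suboptimality_gap_bound :
    ∃ C : ℝ, 0 < C ∧ ∃ k : ℕ,
      ∀ c lam δ : ℝ, 0 < c → 0 < lam → lam ≤ 1 / (c * Real.exp 1) →
        0 < δ → δ < 1 →
        (∑' n : ℕ,
            (16 * (Real.log (1 / (lam * c)) / lam) *
                min (1/2) (Real.sqrt (6 / (n + 1) *
                  Real.log (2 * (n + 1) * (n + 2) / δ)))) *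
              (1 - (1 - Real.exp (-lam * (Real.log (1 / (lam * c)) / lam)))) *
              ((1 - Real.exp (-lam * ((Real.log (1 / (lam * c)) / lam) +
                  16 * (Real.log (1 / (lam * c)) / lam) *
                    min (1/2) (Real.sqrt (6 / (n + 1) *
                      Real.log (2 * (n + 1) * (n + 2) / δ)))))) ^ n -
                (1 - Real.exp (-lam * (Real.log (1 / (lam * c)) / lam))) ^ n))
          ≤ C * (1 / lam) * (1 + Real.log (1 / δ)) ^ k := by
  classical
  have hS1sum : Summable (fun n : ℕ => ((n : ℝ) + 1) ^ (-(3/2) : ℝ)) := by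
    have h := (Real.summable_nat_rpow (p := (-(3/2):ℝ))).mpr (by norm_num)
    have h2 := h.comp_injective Nat.succ_injective
    refine h2.congr fun n => ?_
    simp [Function.comp, Nat.succ_eq_add_one]
  set S1 : ℝ := ∑' n : ℕ, ((n : ℝ) + 1) ^ (-(3/2) : ℝ) with hS1def
  have hS10 : 0 ≤ S1 := tsum_nonneg fun n => Real.rpow_nonneg (by positivity) _
  refine ⟨3125 * (8*1536^2*130*S1 + 25*1536*(Real.exp 1)^2) + 1, ?_, 2, ?_⟩
  · nlinarith [hS10, sq_nonneg (Real.exp 1), Real.exp_pos 1]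
  intro c lam δ hc hlam hle0 hδ0 hδ1
  have hle : lam * (c * Real.exp 1) ≤ 1 := by
    rw [le_div_iff₀ (by positivity)] at hle0
    exact hle0
  -- prelude facts
  have he1 : (1:ℝ) < Real.exp 1 := by
    have := Real.add_one_le_exp 1; linarith [Real.exp_one_gt_d9]
  have hlc0 : 0 < lam * c := mul_pos hlam hc
  have hlce : lam * c ≤ (Real.exp 1)⁻¹ := by
    rw [inv_eq_one_div, le_div_iff₀ (Real.exp_pos 1)]
    linarith [mul_assoc lam c (Real.exp 1)]
  set L : ℝ := Real.log (1 / (lam * c)) with hLdef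
  have hL1 : (1:ℝ) ≤ L := by
    rw [hLdef, Real.le_log_iff_exp_le (by positivity), le_div_iff₀ hlc0]
    linarith [mul_assoc lam c (Real.exp 1), mul_comm (Real.exp 1) (lam * c)]
  have hexpL : Real.exp (-L) = lam * c := by
    rw [hLdef, one_div, Real.log_inv, neg_neg, Real.exp_log hlc0]
  set tau : ℝ := L / lam with htaudef
  have htau0 : 0 < tau := div_pos (by linarith) hlam
  set a : ℝ := ae c lam with hadef
  have hae : a = lam * c * (Real.exp 1)⁻¹ := by rw [hadef, ae]
  have ha0 : 0 < a := by rw [hae]; positivity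
  have ha1 : a ≤ 1 := by
    rw [hae]
    have h2 : (Real.exp 1)⁻¹ ≤ 1 := by
      rw [inv_le_one_iff₀]; right; linarith
    nlinarith [inv_pos.mpr (Real.exp_pos 1)]
  set r : ℝ := Real.exp (-a) with hrdef
  have hr0 : 0 < r := Real.exp_pos _
  have hr1 : r < 1 := by rw [hrdef]; exact Real.exp_lt_one_iff.mpr (by linarith)
  have h1r : a / 2 ≤ 1 - r := by
    have hprod : r * Real.exp a = 1 := by rw [hrdef, ← Real.exp_add]; simp
    nlinarith [Real.add_one_le_exp a, Real.exp_pos a]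
  set P : ℝ := 1 + Real.log (1/δ) with hPdef
  have hdelta' : 0 < Real.log (1/δ) := Real.log_pos (by rw [lt_div_iff₀ hδ0]; linarith)
  have hP1 : 1 ≤ P := by rw [hPdef]; linarith
  have hlog8a : 0 ≤ Real.log (8 / a) := by
    apply Real.log_nonneg
    rw [le_div_iff₀ ha0]; linarith
  have hKv0 : 0 ≤ Kve c lam δ := by
    rw [Kve, ← hLdef, ← htaudef, ← hPdef]
    have : 0 ≤ Real.exp 1 := (Real.exp_pos 1).le
    positivity
  -- summability
  have hgeo : Summable (fun n : ℕ => r ^ n) := summable_geometric_of_lt_one hr0.le hr1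
  have hnr : Summable (fun n : ℕ => (n:ℝ) * r ^ n) := by
    have h := summable_pow_mul_geometric_of_norm_lt_one (R := ℝ) 1
      (r := r) (by rw [Real.norm_eq_abs, abs_of_pos hr0]; exact hr1)
    refine h.congr fun n => ?_
    simp
  have hgsum : Summable (gFe c lam δ) := by
    have h1 := hS1sum.mul_left (D1e c lam δ)
    have h2 := hnr.mul_left (Kve c lam δ * (ae c lam / 4))
    have h3 := hgeo.mul_left (Kve c lam δ * (2 * Real.log (8 / ae c lam) + 2))
    refine ((h1.add h2).add h3).congr fun n => ?_
    rw [gFe, ← hadef, ← hrdef]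
  have hfg : ∀ n : ℕ, termF c lam δ n ≤ gFe c lam δ n :=
    fun n => termF_le_gFe c lam δ hc hlam hle hδ0 hδ1 n
  have hf0 : ∀ n : ℕ, 0 ≤ termF c lam δ n :=
    fun n => termF_nonneg c lam δ hc hlam hle n
  have hfsum : Summable (fun n : ℕ => termF c lam δ n) :=
    Summable.of_nonneg_of_le hf0 hfg hgsum
  -- tsum of gFe
  have htsum1 : (∑' n : ℕ, D1e c lam δ * ((n:ℝ)+1) ^ (-(3/2):ℝ)) = D1e c lam δ * S1 := by
    rw [tsum_mul_left, hS1def]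
  have htsum2 : (∑' n : ℕ, (Kve c lam δ * (a/4)) * ((n:ℝ) * r ^ n))
      = (Kve c lam δ * (a/4)) * (r / (1-r)^2) := by
    rw [tsum_mul_left, tsum_coe_mul_geometric_of_norm_lt_one
      (by rw [Real.norm_eq_abs, abs_of_pos hr0]; exact hr1)]
  have htsum3 : (∑' n : ℕ, (Kve c lam δ * (2 * Real.log (8/a) + 2)) * r ^ n)
      = (Kve c lam δ * (2 * Real.log (8/a) + 2)) * (1-r)⁻¹ := by
    rw [tsum_mul_left, tsum_geometric_of_lt_one hr0.le hr1]
  have htsumg : (∑' n : ℕ, gFe c lam δ n)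
      = D1e c lam δ * S1 + (Kve c lam δ * (a/4)) * (r / (1-r)^2)
        + (Kve c lam δ * (2 * Real.log (8/a) + 2)) * (1-r)⁻¹ := by
    have hg1 := hS1sum.mul_left (D1e c lam δ)
    have hg2 := hnr.mul_left (Kve c lam δ * (a/4))
    have hg3 := hgeo.mul_left (Kve c lam δ * (2 * Real.log (8/a) + 2))
    calc (∑' n : ℕ, gFe c lam δ n)
        = ∑' n : ℕ, (D1e c lam δ * ((n:ℝ)+1) ^ (-(3/2):ℝ)
            + (Kve c lam δ * (a/4)) * ((n:ℝ) * r ^ n)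
            + (Kve c lam δ * (2 * Real.log (8/a) + 2)) * r ^ n) := by
          refine tsum_congr fun n => ?_
          rw [gFe, ← hadef, ← hrdef]
      _ = _ := by
          rw [Summable.tsum_add (hg1.add hg2) hg3, Summable.tsum_add hg1 hg2, htsum1, htsum2, htsum3]
  -- key power bounds
  have hL5 : L^5 * (lam * c) ≤ 3125 := by
    have h5 : L/5 ≤ Real.exp (L/5) := by linarith [Real.add_one_le_exp (L/5)]
    have hp : (L/5)^5 ≤ Real.exp (L/5)^5 :=
      pow_le_pow_left₀ (by linarith) h5 5
    have he5 : Real.exp (L/5)^5 = Real.exp L := by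
      rw [← Real.exp_nat_mul]; norm_num
      ring_nf
    have hLe : L^5 ≤ 3125 * Real.exp L := by
      rw [he5] at hp; linarith [hp]
    have h6 := mul_le_mul_of_nonneg_right hLe (Real.exp_pos (-L)).le
    have h7 : Real.exp L * Real.exp (-L) = 1 := by rw [← Real.exp_add]; simp
    calc L^5 * (lam*c) = L^5 * Real.exp (-L) := by rw [hexpL]
      _ ≤ 3125 * Real.exp L * Real.exp (-L) := by linarith [h6]
      _ = 3125 := by rw [mul_assoc, h7]; norm_num
  have hL2lc : L^2 * (lam * c) ≤ 3125 := by
    have : L^2 ≤ L^5 := pow_le_pow_right₀ hL1 (by norm_num)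
    nlinarith [hlc0.le, hL5]
  have hL3lc : L^3 * (lam * c) ≤ 3125 := by
    have : L^3 ≤ L^5 := pow_le_pow_right₀ hL1 (by norm_num)
    nlinarith [hlc0.le, hL5]
  -- T1 bound
  have hT1 : D1e c lam δ * S1 ≤ 8*1536^2*130*3125 * S1 * P^2 * (1/lam) := by
    have hTa : tau * (lam*c) * L^4 ≤ 3125 * (1/lam) := by
      have heq : tau * (lam*c) * L^4 = (L^5 * (lam*c)) / lam := by
        rw [htaudef]; field_simp
      rw [heq, div_eq_mul_one_div]
      apply mul_le_mul_of_nonneg_right hL5 (by positivity)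
    have hco : (0:ℝ) ≤ 8*1536^2*130 * S1 * P^2 := by positivity
    have := mul_le_mul_of_nonneg_left hTa hco
    calc D1e c lam δ * S1 = (8*1536^2*130 * S1 * P^2) * (tau * (lam*c) * L^4) := by
          rw [D1e, ← hLdef, ← htaudef, ← hPdef]; ring
      _ ≤ (8*1536^2*130 * S1 * P^2) * (3125 * (1/lam)) := this
      _ = 8*1536^2*130*3125 * S1 * P^2 * (1/lam) := by ring
  -- T2 bound
  have hrq : r / (1-r)^2 ≤ 4 / a^2 := by
    have h2 : (a/2)^2 ≤ (1-r)^2 := pow_le_pow_left₀ (by positivity) h1r 2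
    rw [div_le_div_iff₀ (by nlinarith) (by positivity)]
    nlinarith [h2, hr1.le, sq_nonneg a]
  have hKva : Kve c lam δ * (a/4) * (4/a^2) = 1536*(Real.exp 1)^2*tau*L*(lam*c)*P := by
    rw [Kve, ← hLdef, ← htaudef, ← hPdef, hae]
    have hexne : Real.exp 1 ≠ 0 := (Real.exp_pos 1).ne'
    field_simp
  have htauLlc : tau * L * (lam*c) ≤ 3125 * (1/lam) := by
    have heq : tau * L * (lam*c) = (L^2 * (lam*c)) / lam := by
      rw [htaudef]; field_simp
    rw [heq, div_eq_mul_one_div]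
    apply mul_le_mul_of_nonneg_right hL2lc (by positivity)
  have hT2 : (Kve c lam δ * (a/4)) * (r / (1-r)^2) ≤ 1536*3125*(Real.exp 1)^2 * P * (1/lam) := by
    have hco : 0 ≤ Kve c lam δ * (a/4) := mul_nonneg hKv0 (by positivity)
    have h1 := mul_le_mul_of_nonneg_left hrq hco
    have hco2 : (0:ℝ) ≤ 1536*(Real.exp 1)^2*P := by positivity
    have h2 := mul_le_mul_of_nonneg_left htauLlc hco2
    calc (Kve c lam δ * (a/4)) * (r / (1-r)^2) ≤ Kve c lam δ * (a/4) * (4/a^2) := h1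
      _ = (1536*(Real.exp 1)^2*P) * (tau*L*(lam*c)) := by rw [hKva]; ring
      _ ≤ (1536*(Real.exp 1)^2*P) * (3125 * (1/lam)) := h2
      _ = 1536*3125*(Real.exp 1)^2 * P * (1/lam) := by ring
  -- T3 bound
  have hloglc : Real.log (lam*c) = -L := by rw [← hexpL, Real.log_exp]
  have hloga : Real.log a = -L - 1 := by
    rw [hae, Real.log_mul (ne_of_gt hlc0) (by positivity), hloglc, Real.log_inv, Real.log_exp]
    ring
  have hlog8le : Real.log (8/a) ≤ L + 4 := by
    rw [Real.log_div (by norm_num) (ne_of_gt ha0), hloga]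
    have h8 : Real.log 8 ≤ 3 := by
      have : (8:ℝ) = 2^3 := by norm_num
      rw [this, Real.log_pow]
      push_cast
      nlinarith [Real.log_two_lt_d9]
    linarith
  have h12L : 2 * Real.log (8/a) + 2 ≤ 12 * L := by linarith [hlog8le, hL1]
  have hinvr : (1-r)⁻¹ ≤ 2/a := by
    have h1 : 1/(1-r) ≤ 1/(a/2) := by
      apply one_div_le_one_div_of_le (by positivity) h1r
    rw [one_div_div] at h1
    rw [← one_div]
    exact h1
  have hKva2 : Kve c lam δ * (12*L) * (2/a) = 24*1536*(Real.exp 1)^2*tau*(L^2)*(lam*c)*P := by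
    rw [Kve, ← hLdef, ← htaudef, ← hPdef, hae]
    have hexne : Real.exp 1 ≠ 0 := (Real.exp_pos 1).ne'
    have he2 : Real.exp 2 = Real.exp 1 * Real.exp 1 := by rw [← Real.exp_add]; norm_num
    field_simp
    ring
  have htauL2lc : tau * L^2 * (lam*c) ≤ 3125 * (1/lam) := by
    have heq : tau * L^2 * (lam*c) = (L^3 * (lam*c)) / lam := by
      rw [htaudef]; field_simp
    rw [heq, div_eq_mul_one_div]
    apply mul_le_mul_of_nonneg_right hL3lc (by positivity)
  have hT3 : (Kve c lam δ * (2 * Real.log (8/a) + 2)) * (1-r)⁻¹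
      ≤ 24*1536*3125*(Real.exp 1)^2 * P * (1/lam) := by
    have hco : 0 ≤ Kve c lam δ * (2 * Real.log (8/a) + 2) :=
      mul_nonneg hKv0 (by linarith)
    have h1 := mul_le_mul_of_nonneg_left hinvr hco
    have h2 : Kve c lam δ * (2 * Real.log (8/a) + 2) * (2/a) ≤ Kve c lam δ * (12*L) * (2/a) := by
      apply mul_le_mul_of_nonneg_right (mul_le_mul_of_nonneg_left h12L hKv0) (by positivity)
    have hco2 : (0:ℝ) ≤ 24*1536*(Real.exp 1)^2*P := by positivity
    have h3 := mul_le_mul_of_nonneg_left htauL2lc hco2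
    calc (Kve c lam δ * (2 * Real.log (8/a) + 2)) * (1-r)⁻¹
        ≤ Kve c lam δ * (2 * Real.log (8/a) + 2) * (2/a) := h1
      _ ≤ Kve c lam δ * (12*L) * (2/a) := h2
      _ = (24*1536*(Real.exp 1)^2*P) * (tau*(L^2)*(lam*c)) := by rw [hKva2]; ring
      _ ≤ (24*1536*(Real.exp 1)^2*P) * (3125*(1/lam)) := h3
      _ = 24*1536*3125*(Real.exp 1)^2 * P * (1/lam) := by ring
  -- assemble
  have hPP : P * (1/lam) ≤ P^2 * (1/lam) := by
    have h0 : 0 ≤ P * (1/lam) := by positivity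
    have h1 := mul_le_mul_of_nonneg_right hP1 h0
    linarith only [h1]
  have hfinal : (∑' n : ℕ, termF c lam δ n)
      ≤ (3125 * (8*1536^2*130*S1 + 25*1536*(Real.exp 1)^2) + 1) * (1/lam) * P^2 := by
    have h1 := Summable.tsum_le_tsum hfg hfsum hgsum
    have h0 : (0:ℝ) ≤ (1/lam) * P^2 := by positivity
    have hS1P : 0 ≤ S1 * P^2 * (1/lam) := by positivity
    rw [htsumg] at h1
    have hPPe := mul_le_mul_of_nonneg_left hPP (sq_nonneg (Real.exp 1))
    linarith only [h1, hT1, hT2, hT3, hPPe, h0]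
  calc _ = (∑' n : ℕ, termF c lam δ n) := tsum_congr fun n => rfl
    _ ≤ _ := hfinal
    _ = _ := by rw [hPdef]
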